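/- The orthogonal projection P_{A'} onto the commutant A' of a finite-dimensional unital *-subalgebra A ⊆ B(H) equals the Haar average over the unitary group U(A) of A: P_{A'}(B) = ∫ U† B U dμ(U), where μ is the normalized Haar measure on the compact group of unitaries in A. -/

import Mathlib

open Matrix Kronecker MeasureTheory
open scoped ComplexOrder

noncomputable section

/-- Square complex matrices of size `n`. -/
abbrev Mat (n : ℕ) := Matrix (Fin n) (Fin n) ℂ

/-- Operator norm (spectral norm) of a square matrix. -/
noncomputable def opNorm {m : Type*} [Fintype m] [DecidableEq m]
    (A : Matrix m m ℂ) : ℝ :=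
  ‖Matrix.toEuclideanCLM (𝕜 := ℂ) A‖

/-- Trace norm of a square matrix. -/
noncomputable def traceNorm {m : Type*} [Fintype m] [DecidableEq m]
    (A : Matrix m m ℂ) : ℝ :=
  ((((Matrix.posSemidef_conjTranspose_mul_self A).1.eigenvectorUnitary : Matrix m m ℂ) *
    diagonal (((↑) : ℝ → ℂ) ∘ (√·) ∘ (Matrix.posSemidef_conjTranspose_mul_self A).1.eigenvalues) *
    (star ((Matrix.posSemidef_conjTranspose_mul_self A).1.eigenvectorUnitary : Matrix m m ℂ)))).trace.re

/-- Trivial extension `Φ ⊗ id` of a map on matrices, defined entrywise. -/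
def extendId {a b : ℕ} (Φ : Mat a → Mat b) (m : ℕ)
    (M : Matrix (Fin a × Fin m) (Fin a × Fin m) ℂ) :
    Matrix (Fin b × Fin m) (Fin b × Fin m) ℂ :=
  Matrix.of fun r c => Φ (Matrix.of fun p q => M (p, r.2) (q, c.2)) r.1 c.1

/-- Diamond norm of a (difference of) map(s) `Mat a → Mat b`, with ancilla of
dimension equal to the input dimension. -/
noncomputable def dnorm {a b : ℕ} (Φ : Mat a → Mat b) : ℝ :=
  ⨆ ρ : {ρ : Matrix (Fin a × Fin a) (Fin a × Fin a) ℂ // ρ.PosSemidef ∧ ρ.trace = 1},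
    traceNorm (extendId Φ a ρ.1)

/-- A map is a quantum channel (CPTP) iff it admits a Kraus representation. -/
def IsCPTP {a b : ℕ} (Φ : Mat a → Mat b) : Prop :=
  ∃ (κ : ℕ) (K : Fin κ → Matrix (Fin b) (Fin a) ℂ),
    (∀ ρ, Φ ρ = ∑ i, K i * ρ * (K i)ᴴ) ∧ (∑ i, (K i)ᴴ * K i = 1)

/-- `Nh` is a complementary channel of `N` (with environment of dimension `e`). -/
def IsComplementary {a b e : ℕ} (N : Mat a → Mat b) (Nh : Mat a → Mat e) : Prop :=
  ∃ K : Fin e → Matrix (Fin b) (Fin a) ℂ,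
    (∀ ρ, N ρ = ∑ i, K i * ρ * (K i)ᴴ) ∧ (∑ i, (K i)ᴴ * K i = 1) ∧
    (∀ ρ, Nh ρ = Matrix.of fun i j => (K i * ρ * (K j)ᴴ).trace)

/-- The commutant of a set of matrices. -/
def commutant {n : ℕ} (A : Set (Mat n)) : Set (Mat n) :=
  {X | ∀ a ∈ A, a * X = X * a}

/-- `P` is the Hilbert–Schmidt-orthogonal projection onto the set `S`. -/
def IsHSProjectionOnto {n : ℕ} (P : Mat n → Mat n) (S : Set (Mat n)) : Prop :=
  (∀ X, P X ∈ S) ∧ (∀ X ∈ S, P X = X) ∧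
  (∀ X Y, ((P X)ᴴ * Y).trace = (Xᴴ * P Y).trace)

end

section AuxStmt2

open Polynomial

noncomputable section

/-- Conjugation by a unitary as an algebra hom. -/
def conjAlgHom {n : ℕ} (u : Mat n) (hu : u * star u = 1) (hsu : star u * u = 1) :
    Mat n →ₐ[ℂ] Mat n where
  toFun M := u * M * star u
  map_one' := by show u * 1 * star u = 1; rw [mul_one, hu]
  map_mul' M N := by
    show u * (M * N) * star u = (u * M * star u) * (u * N * star u)
    have h : u * M * star u * (u * N * star u) = u * M * (star u * u) * (N * star u) := by
      noncomm_ring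
    rw [h, hsu, mul_one]
    noncomm_ring
  map_zero' := by show u * 0 * star u = 0; simp
  map_add' M N := by show u * (M + N) * star u = _; rw [mul_add, add_mul]
  commutes' c := by
    show u * algebraMap ℂ (Mat n) c * star u = algebraMap ℂ (Mat n) c
    rw [← Algebra.commutes c u, mul_assoc, hu, mul_one]

lemma aeval_unitary_conj {n : ℕ} (u d : Mat n) (hu : u * star u = 1) (hsu : star u * u = 1)
    (q : ℂ[X]) :
    aeval (u * d * star u) q = u * aeval d q * star u :=
  aeval_algHom_apply (conjAlgHom u hu hsu) d q

lemma aeval_diagonal {n : ℕ} (d : Fin n → ℂ) (q : ℂ[X]) :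
    aeval (Matrix.diagonal d) q = Matrix.diagonal (fun i => q.eval (d i)) := by
  have h := aeval_algHom_apply (Matrix.diagonalAlgHom (n := Fin n) (α := ℂ) ℂ) d q
  simp only [Matrix.diagonalAlgHom_apply] at h
  rw [h, Matrix.diagonal_eq_diagonal_iff]
  intro i
  have h2 := aeval_algHom_apply (Pi.evalAlgHom ℂ (fun _ : Fin n => ℂ) i) d q
  simp only [Pi.evalAlgHom_apply] at h2
  rw [← h2, Polynomial.coe_aeval_eq_eval]

lemma diagonal_sum' {n : ℕ} (s : Finset ℂ) (f : ℂ → Fin n → ℂ) :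
    ∑ c ∈ s, Matrix.diagonal (f c) = Matrix.diagonal (fun i => ∑ c ∈ s, f c i) := by
  ext i j
  by_cases h : i = j
  · subst h; simp [Matrix.sum_apply, Matrix.diagonal_apply]
  · simp [Matrix.sum_apply, Matrix.diagonal_apply_ne _ h]

lemma hermitian_mem_span {n : ℕ} (A : StarSubalgebra ℂ (Mat n)) {x : Mat n}
    (hxA : x ∈ A) (hx : x.IsHermitian) :
    x ∈ Submodule.span ℂ {w : Mat n | w ∈ A ∧ w ∈ unitary (Mat n)} := by
  classical
  set U : Mat n := (hx.eigenvectorUnitary : Mat n) with hU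
  have hu : U * star U = 1 := (Matrix.mem_unitaryGroup_iff).mp (hx.eigenvectorUnitary).2
  have hsu : star U * U = 1 := (Matrix.mem_unitaryGroup_iff').mp (hx.eigenvectorUnitary).2
  have hspec : x = U * Matrix.diagonal (RCLike.ofReal ∘ hx.eigenvalues) * star U :=
    hx.spectral_theorem
  set lam : Fin n → ℂ := fun i => ((hx.eigenvalues i : ℝ) : ℂ) with hlam
  set s : Finset ℂ := Finset.image lam Finset.univ with hs
  set ind : ℂ → Fin n → ℂ := fun c i => if lam i = c then 1 else 0 with hind
  set p : ℂ → Mat n := fun c => U * Matrix.diagonal (ind c) * star U with hp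
  -- helpers
  have hsmul : ∀ (c : ℂ) (d : Fin n → ℂ),
      c • (U * Matrix.diagonal d * star U) = U * Matrix.diagonal (fun i => c * d i) * star U := by
    intro c d
    rw [show (fun i => c * d i) = c • d from rfl, Matrix.diagonal_smul]
    simp [Matrix.smul_mul, Matrix.mul_smul]
  have hmul : ∀ (d d' : Fin n → ℂ),
      (U * Matrix.diagonal d * star U) * (U * Matrix.diagonal d' * star U)
        = U * Matrix.diagonal (fun i => d i * d' i) * star U := by
    intro d d'
    have h2 : U * Matrix.diagonal d * star U * (U * Matrix.diagonal d' * star U)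
        = U * Matrix.diagonal d * (star U * U) * (Matrix.diagonal d' * star U) := by
      noncomm_ring
    rw [h2, hsu, mul_one, ← Matrix.diagonal_mul_diagonal]
    noncomm_ring
  have hstar : ∀ (d : Fin n → ℂ),
      star (U * Matrix.diagonal d * star U) = U * Matrix.diagonal (star d) * star U := by
    intro d
    rw [Matrix.star_mul, Matrix.star_mul, star_star,
      Matrix.star_eq_conjTranspose (Matrix.diagonal d), Matrix.diagonal_conjTranspose,
      ← Matrix.mul_assoc]
  have hone : (1 : Mat n) = U * Matrix.diagonal (fun _ : Fin n => (1:ℂ)) * star U := by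
    rw [Matrix.diagonal_one, mul_one, hu]
  -- each p c is in A
  have hpA : ∀ c, p c ∈ A := by
    intro c
    set q : ℂ[X] := Lagrange.interpolate s id (fun z => if z = c then 1 else 0) with hq
    have heval : ∀ i : Fin n, q.eval (lam i) = ind c i := by
      intro i
      have hmem : lam i ∈ s := Finset.mem_image_of_mem lam (Finset.mem_univ i)
      exact Lagrange.eval_interpolate_at_node (r := fun z => if z = c then 1 else 0)
        (Set.injOn_id _) hmem
    have hxq : aeval x q = p c := by
      rw [hspec, aeval_unitary_conj U _ hu hsu, aeval_diagonal, hp]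
      have he : (fun i => eval ((RCLike.ofReal ∘ hx.eigenvalues) i) q) = ind c := by
        funext i; exact heval i
      rw [he]
    have hadj : aeval x q ∈ Algebra.adjoin ℂ ({x} : Set (Mat n)) :=
      Polynomial.aeval_mem_adjoin_singleton ℂ x
    have hle : Algebra.adjoin ℂ ({x} : Set (Mat n)) ≤ A.toSubalgebra :=
      Algebra.adjoin_le (Set.singleton_subset_iff.mpr hxA)
    rw [← hxq]
    exact hle hadj
  -- the unitaries w c
  set w : ℂ → Mat n := fun c => 1 - (2:ℂ) • p c with hw
  have hwdiag : ∀ c, w c = U * Matrix.diagonal (fun i => 1 - 2 * ind c i) * star U := by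
    intro c
    rw [hw]
    simp only [hp]
    rw [hsmul, hone, ← Matrix.sub_mul, ← Matrix.mul_sub, Matrix.diagonal_sub]
  have hwA : ∀ c, w c ∈ A := fun c => A.sub_mem (A.one_mem) (A.smul_mem (hpA c) _)
  have hwU : ∀ c, w c ∈ unitary (Mat n) := by
    intro c
    have hds : (star fun i => 1 - 2 * ind c i) = fun i => 1 - 2 * ind c i := by
      funext i
      simp only [hind, Pi.star_apply]
      split <;> simp
    have hst : star (w c) = w c := by
      rw [hwdiag c, hstar, hds]
    have hsq : w c * w c = 1 := by
      rw [hwdiag c, hmul]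
      have : (fun i => (1 - 2 * ind c i) * (1 - 2 * ind c i)) = fun _ : Fin n => (1:ℂ) := by
        funext i
        simp only [hind]
        split <;> ring
      rw [this, Matrix.diagonal_one, mul_one, hu]
    exact ⟨by rw [hst, hsq], by rw [hst, hsq]⟩
  -- x as a combination
  have hsum : x = ∑ c ∈ s, c • p c := by
    have he : (RCLike.ofReal ∘ hx.eigenvalues : Fin n → ℂ) = fun i => ∑ c ∈ s, c * ind c i := by
      funext i
      simp only [hind, mul_ite, mul_one, mul_zero, Function.comp]
      rw [Finset.sum_ite_eq s (lam i) (fun c => c)]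
      simp [hs, hlam]
    rw [hspec]
    simp only [hp, hsmul]
    rw [← Finset.sum_mul, ← Finset.mul_sum, diagonal_sum', he]
  -- conclude
  set S : Set (Mat n) := {v : Mat n | v ∈ A ∧ v ∈ unitary (Mat n)} with hS
  have honeS : (1 : Mat n) ∈ Submodule.span ℂ S :=
    Submodule.subset_span ⟨A.one_mem, one_mem _⟩
  have hwS : ∀ c, w c ∈ Submodule.span ℂ S :=
    fun c => Submodule.subset_span ⟨hwA c, hwU c⟩
  have hpS : ∀ c, p c ∈ Submodule.span ℂ S := by
    intro c
    have h : p c = (2⁻¹:ℂ) • (1 : Mat n) - (2⁻¹:ℂ) • w c := by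
      rw [hw]; simp only [smul_sub, smul_smul]
      norm_num
    rw [h]
    exact Submodule.sub_mem _ (Submodule.smul_mem _ _ honeS) (Submodule.smul_mem _ _ (hwS c))
  rw [hsum]
  exact Submodule.sum_mem _ (fun c _ => Submodule.smul_mem _ _ (hpS c))

/-- The entry functional as a linear map. -/
def entryLM {n : ℕ} (i j : Fin n) : Mat n →ₗ[ℂ] ℂ where
  toFun M := M i j
  map_add' _ _ := rfl
  map_smul' _ _ := rfl

/-- The embedding of matrices into Euclidean space. -/
def eE {n : ℕ} (M : Mat n) : EuclideanSpace ℂ (Fin n × Fin n) := WithLp.toLp 2 (fun p : Fin n × Fin n => M p.1 p.2)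

lemma inner_eE {n : ℕ} (M N : Mat n) :
    (inner ℂ (eE M) (eE N) : ℂ) = (Mᴴ * N).trace := by
  classical
  have h : (inner ℂ (eE M) (eE N) : ℂ)
      = ∑ p : Fin n × Fin n, (starRingEnd ℂ) (M p.1 p.2) * N p.1 p.2 := by
    simp [PiLp.inner_apply, RCLike.inner_apply, eE, mul_comm]
  rw [h, Fintype.sum_prod_type, Matrix.trace]
  simp only [Matrix.diag_apply, Matrix.mul_apply, Matrix.conjTranspose_apply]
  exact Finset.sum_comm

lemma normsq_eE {n : ℕ} (M : Mat n) :
    ((‖eE M‖ : ℝ) : ℂ) ^ 2 = (Mᴴ * M).trace := by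
  rw [← inner_eE, inner_self_eq_norm_sq_to_K]
  norm_num

lemma eE_norm_eq_of_trace_eq {n : ℕ} (M N : Mat n)
    (h : (Mᴴ * M).trace = (Nᴴ * N).trace) : ‖eE M‖ = ‖eE N‖ := by
  have h2 : ((‖eE M‖ : ℝ) : ℂ) ^ 2 = ((‖eE N‖ : ℝ) : ℂ) ^ 2 := by
    rw [normsq_eE, normsq_eE, h]
  have h3 : ‖eE M‖ ^ 2 = ‖eE N‖ ^ 2 := by exact_mod_cast h2
  nlinarith [norm_nonneg (eE M), norm_nonneg (eE N)]

lemma inner_tt_zero {E : Type*} [NormedAddCommGroup E] [InnerProductSpace ℂ E]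
    (x y : E) (h : ∀ t : ℂ, ‖x‖ ≤ ‖x + t • y‖) : (inner ℂ x y : ℂ) = 0 := by
  by_contra hc
  set c : ℂ := inner ℂ x y with hcdef
  set s : ℝ := (‖y‖ ^ 2 + 1)⁻¹ with hsdef
  have hs0 : 0 < s := by positivity
  set t : ℂ := -(s : ℂ) * starRingEnd ℂ c with htdef
  have h1 : ‖x‖ ^ 2 ≤ ‖x + t • y‖ ^ 2 := by
    have := h t
    nlinarith [norm_nonneg x, norm_nonneg (x + t • y)]
  rw [norm_add_sq (𝕜 := ℂ)] at h1
  have h3 : RCLike.re (inner ℂ x (t • y) : ℂ) = -s * ‖c‖ ^ 2 := by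
    have he : (inner ℂ x (t • y) : ℂ) = ((-s * ‖c‖ ^ 2 : ℝ) : ℂ) := by
      rw [inner_smul_right, ← hcdef, htdef, mul_assoc, RCLike.conj_mul]
      norm_num
    rw [he, RCLike.re_to_complex, Complex.ofReal_re]
  have h4 : ‖t • y‖ = s * ‖c‖ * ‖y‖ := by
    rw [norm_smul, htdef]
    simp [abs_of_pos hs0, mul_assoc]
  have hc0 : 0 < ‖c‖ := norm_pos_iff.mpr hc
  have hsy : s * ‖y‖ ^ 2 = 1 - s := by
    have : s * (‖y‖ ^ 2 + 1) = 1 := by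
      rw [hsdef]; field_simp
    linarith [this]
  rw [h3, h4] at h1
  have hexp : (s * ‖c‖ * ‖y‖) ^ 2 = s * ‖c‖ ^ 2 * (s * ‖y‖ ^ 2) := by ring
  rw [hexp, hsy] at h1
  nlinarith [mul_pos hs0 (mul_pos hc0 hc0), mul_pos (mul_pos hs0 (mul_pos hc0 hc0)) hs0]

def traceMulLM {n : ℕ} (C : Mat n) : Mat n →ₗ[ℂ] ℂ where
  toFun M := (C * M).trace
  map_add' M N := by show (C * (M + N)).trace = _; rw [Matrix.mul_add, Matrix.trace_add]
  map_smul' c M := by show (C * (c • M)).trace = _; rw [Matrix.mul_smul, Matrix.trace_smul]; rfl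

lemma traceMulLM_apply {n : ℕ} (C M : Mat n) : traceMulLM C M = (C * M).trace := rfl

lemma trace_std_test {n : ℕ} (i j : Fin n) (Y : Mat n) :
    ((Matrix.single i j (1:ℂ))ᴴ * Y).trace = Y i j := by
  classical
  have h1 : ((Matrix.single i j (1:ℂ))ᴴ * Y).trace
      = ∑ k, ∑ l, star ((Matrix.single i j (1:ℂ)) l k) * Y l k := by
    simp only [Matrix.trace, Matrix.diag_apply, Matrix.mul_apply, Matrix.conjTranspose_apply]
  rw [h1]
  have h2 : ∀ k l : Fin n, star ((Matrix.single i j (1:ℂ)) l k) * Y l k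
      = if i = l then (if j = k then Y l k else 0) else 0 := by
    intro k l
    by_cases hil : i = l <;> by_cases hjk : j = k <;>
      simp [Matrix.single, hil, hjk]
  simp only [h2]
  simp

lemma eq_of_trace_tests {n : ℕ} (M N : Mat n)
    (h : ∀ X : Mat n, (Xᴴ * M).trace = (Xᴴ * N).trace) : M = N := by
  ext i j
  have hh := h (Matrix.single i j 1)
  rwa [trace_std_test, trace_std_test] at hh

lemma conj_trace_form {n : ℕ} (X Y : Mat n) :
    starRingEnd ℂ ((Xᴴ * Y).trace) = (Yᴴ * X).trace := by
  have h : ((Xᴴ * Y).trace) = star ((Xᴴ * Y)ᴴ).trace := by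
    rw [Matrix.trace_conjTranspose]
    simp
  rw [h, Matrix.conjTranspose_mul, Matrix.conjTranspose_conjTranspose]
  simp [Complex.star_def]

lemma eE_add {n : ℕ} (M N : Mat n) : eE (M + N) = eE M + eE N := rfl

lemma eE_smul {n : ℕ} (c : ℂ) (M : Mat n) : eE (c • M) = c • eE M := rfl

lemma eE_inj {n : ℕ} (M : Mat n) (h : eE M = 0) : M = 0 := by
  ext i j
  have h2 := congrArg (fun v => v (i, j)) h
  exact h2

lemma mem_span_unitaries {n : ℕ} (A : StarSubalgebra ℂ (Mat n)) {a : Mat n} (ha : a ∈ A) :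
    a ∈ Submodule.span ℂ {w : Mat n | w ∈ A ∧ w ∈ unitary (Mat n)} := by
  have haH : aᴴ ∈ A := by
    have h := star_mem (s := A) ha
    rwa [Matrix.star_eq_conjTranspose] at h
  set x : Mat n := (2⁻¹ : ℂ) • (a + aᴴ) with hxdef
  set y : Mat n := (-Complex.I * 2⁻¹) • (a - aᴴ) with hydef
  have hxA : x ∈ A := A.smul_mem (A.add_mem ha haH) _
  have hyA : y ∈ A := A.smul_mem (A.sub_mem ha haH) _
  have hxH : x.IsHermitian := by
    show xᴴ = x
    rw [hxdef, Matrix.conjTranspose_smul, Matrix.conjTranspose_add,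
      Matrix.conjTranspose_conjTranspose]
    have h1 : star (2⁻¹ : ℂ) = (2⁻¹ : ℂ) := by norm_num [Complex.star_def]
    rw [h1, add_comm]
  have hyH : y.IsHermitian := by
    show yᴴ = y
    rw [hydef, Matrix.conjTranspose_smul, Matrix.conjTranspose_sub,
      Matrix.conjTranspose_conjTranspose]
    have h1 : star (-Complex.I * 2⁻¹) = Complex.I * 2⁻¹ := by
      simp [Complex.star_def]
    rw [h1]
    module
  have hdecomp : a = x + Complex.I • y := by
    rw [hxdef, hydef, smul_smul]
    have h1 : Complex.I * (-Complex.I * 2⁻¹) = (2⁻¹ : ℂ) := by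
      have h2 : Complex.I * (-Complex.I * 2⁻¹) = -(Complex.I * Complex.I) * 2⁻¹ := by ring
      rw [h2, Complex.I_mul_I]
      norm_num
    rw [h1]
    module
  rw [hdecomp]
  exact Submodule.add_mem _ (hermitian_mem_span A hxA hxH)
    (Submodule.smul_mem _ _ (hermitian_mem_span A hyA hyH))

end

end AuxStmt2

/-- the HS projection onto the commutant is the Haar average
over the unitary group of the algebra. -/
theorem stmt_2 {n : ℕ} (A : StarSubalgebra ℂ (Mat n))
    (G : Subgroup (Matrix.unitaryGroup (Fin n) ℂ))
    (hG : ∀ U : Matrix.unitaryGroup (Fin n) ℂ, U ∈ G ↔ (U : Mat n) ∈ A)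
    [MeasurableSpace G] (μ : Measure G) [IsProbabilityMeasure μ]
    (hInv : ∀ (f : G → ℂ) (V : G), ∫ U, f (V * U) ∂μ = ∫ U, f U ∂μ)
    (hInt : ∀ (B : Mat n) (i j : Fin n),
      Integrable (fun U : G => ((U.1 : Mat n)ᴴ * B * (U.1 : Mat n)) i j) μ)
    (P : Mat n → Mat n)
    (hP : IsHSProjectionOnto P (commutant (A : Set (Mat n))))
    (B : Mat n) :
    P B = Matrix.of fun i j =>
      ∫ U, ((U.1 : Mat n)ᴴ * B * (U.1 : Mat n)) i j ∂μ := by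
  classical
  set Q : Mat n → Mat n := fun M => Matrix.of fun i j =>
    ∫ U, ((U.1 : Mat n)ᴴ * M * (U.1 : Mat n)) i j ∂μ with hQdef
  show P B = Q B
  -- basic facts about elements of G
  have hmA : ∀ U : G, (U.1 : Mat n) ∈ A := fun U => (hG U.1).mp U.2
  have hmsu : ∀ U : G, (U.1 : Mat n)ᴴ * (U.1 : Mat n) = 1 := by
    intro U
    have h := Unitary.coe_star_mul_self U.1
    rwa [← Matrix.star_eq_conjTranspose]
  have hmus : ∀ U : G, (U.1 : Mat n) * (U.1 : Mat n)ᴴ = 1 := by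
    intro U
    have h := Unitary.coe_mul_star_self U.1
    rwa [← Matrix.star_eq_conjTranspose]
  have hminv : ∀ U : G, (((U⁻¹).1 : Mat n)) = (U.1 : Mat n)ᴴ := by
    intro U
    have h1 : (U⁻¹).1 = (U.1)⁻¹ := rfl
    rw [h1, ← Unitary.star_eq_inv]
    rfl
  have hmmul : ∀ U V : G, (((U * V).1 : Mat n)) = (U.1 : Mat n) * (V.1 : Mat n) := fun U V => rfl
  -- representation of linear functionals
  have hrep : ∀ (φ : Mat n →ₗ[ℂ] ℂ) (N : Mat n),
      φ N = ∑ k : Fin n, ∑ l : Fin n, N k l * φ (Matrix.single k l 1) := by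
    intro φ N
    conv_lhs => rw [Matrix.matrix_eq_sum_single N]
    rw [map_sum]
    refine Finset.sum_congr rfl fun k _ => ?_
    rw [map_sum]
    refine Finset.sum_congr rfl fun l _ => ?_
    have h : Matrix.single k l (N k l) = (N k l) • Matrix.single k l 1 := by
      rw [Matrix.smul_single, smul_eq_mul, mul_one]
    rw [h, LinearMap.map_smul, smul_eq_mul]
  -- the master linearity lemma
  have keyInt : ∀ (φ : Mat n →ₗ[ℂ] ℂ) (M : Mat n),
      Integrable (fun U : G => φ ((U.1 : Mat n)ᴴ * M * (U.1 : Mat n))) μ := by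
    intro φ M
    have h : (fun U : G => φ ((U.1 : Mat n)ᴴ * M * (U.1 : Mat n)))
        = fun U => ∑ k : Fin n, ∑ l : Fin n,
            ((U.1 : Mat n)ᴴ * M * (U.1 : Mat n)) k l * φ (Matrix.single k l 1) :=
      funext fun U => hrep φ _
    rw [h]
    exact integrable_finset_sum _ fun k _ =>
      integrable_finset_sum _ fun l _ => (hInt M k l).mul_const _
  have keyEq : ∀ (φ : Mat n →ₗ[ℂ] ℂ) (M : Mat n),
      ∫ U, φ ((U.1 : Mat n)ᴴ * M * (U.1 : Mat n)) ∂μ = φ (Q M) := by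
    intro φ M
    have h : (fun U : G => φ ((U.1 : Mat n)ᴴ * M * (U.1 : Mat n)))
        = fun U => ∑ k : Fin n, ∑ l : Fin n,
            ((U.1 : Mat n)ᴴ * M * (U.1 : Mat n)) k l * φ (Matrix.single k l 1) :=
      funext fun U => hrep φ _
    rw [h, integral_finset_sum _ (fun k _ =>
      integrable_finset_sum _ fun l _ => (hInt M k l).mul_const _)]
    rw [hrep φ (Q M)]
    refine Finset.sum_congr rfl fun k _ => ?_
    rw [integral_finset_sum _ (fun l _ => (hInt M k l).mul_const _)]
    refine Finset.sum_congr rfl fun l _ => ?_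
    rw [MeasureTheory.integral_mul_const]
    rfl
  -- linearity of Q
  have hQadd : ∀ (M N : Mat n), Q (M + N) = Q M + Q N := by
    intro M N
    ext i j
    show (∫ U, ((U.1 : Mat n)ᴴ * (M + N) * (U.1 : Mat n)) i j ∂μ) = _
    have h : (fun U : G => ((U.1 : Mat n)ᴴ * (M + N) * (U.1 : Mat n)) i j)
        = fun U => ((U.1 : Mat n)ᴴ * M * (U.1 : Mat n)) i j
            + ((U.1 : Mat n)ᴴ * N * (U.1 : Mat n)) i j := by
      funext U
      have h2 : (U.1 : Mat n)ᴴ * (M + N) * (U.1 : Mat n)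
          = (U.1 : Mat n)ᴴ * M * (U.1 : Mat n) + (U.1 : Mat n)ᴴ * N * (U.1 : Mat n) := by
        noncomm_ring
      rw [h2]
      rfl
    rw [h, integral_add (hInt M i j) (hInt N i j)]
    rfl
  have hQsmul : ∀ (c : ℂ) (M : Mat n), Q (c • M) = c • Q M := by
    intro c M
    ext i j
    show (∫ U, ((U.1 : Mat n)ᴴ * (c • M) * (U.1 : Mat n)) i j ∂μ) = _
    have h : (fun U : G => ((U.1 : Mat n)ᴴ * (c • M) * (U.1 : Mat n)) i j)
        = fun U => c • (((U.1 : Mat n)ᴴ * M * (U.1 : Mat n)) i j) := by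
      funext U
      have h2 : (U.1 : Mat n)ᴴ * (c • M) * (U.1 : Mat n)
          = c • ((U.1 : Mat n)ᴴ * M * (U.1 : Mat n)) := by
        rw [Matrix.mul_smul, Matrix.smul_mul]
      rw [h2]
      rfl
    rw [h, integral_smul]
    rfl
  have hQsub : ∀ (M N : Mat n), Q (M - N) = Q M - Q N := by
    intro M N
    have h : M - N = M + (-1 : ℂ) • N := by
      rw [neg_one_smul]; exact sub_eq_add_neg M N
    rw [h, hQadd, hQsmul, neg_one_smul]
    exact (sub_eq_add_neg (Q M) (Q N)).symm
  -- the entry functionals of Q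
  have hQLM : ∀ i j : Fin n, ∃ φ : Mat n →ₗ[ℂ] ℂ, ∀ M, φ M = Q M i j := by
    intro i j
    refine ⟨⟨⟨fun M => Q M i j, fun M N => by show Q (M + N) i j = _; rw [hQadd]; rfl⟩,
      fun c M => by show Q (c • M) i j = _; rw [hQsmul]; rfl⟩, fun M => rfl⟩
  -- invariance: Q (V M V†) = Q M
  have hconjQ : ∀ (V : G) (M : Mat n),
      Q ((V.1 : Mat n) * M * (V.1 : Mat n)ᴴ) = Q M := by
    intro V M
    ext i j
    show (∫ U, ((U.1 : Mat n)ᴴ * ((V.1 : Mat n) * M * (V.1 : Mat n)ᴴ) * (U.1 : Mat n)) i j ∂μ)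
      = ∫ U, ((U.1 : Mat n)ᴴ * M * (U.1 : Mat n)) i j ∂μ
    rw [← hInv (fun U : G => ((U.1 : Mat n)ᴴ * M * (U.1 : Mat n)) i j) V⁻¹]
    congr 1
    funext U
    show _ = (((V⁻¹ * U).1 : Mat n)ᴴ * M * ((V⁻¹ * U).1 : Mat n)) i j
    have h1 : (((V⁻¹ * U).1 : Mat n)) = (V.1 : Mat n)ᴴ * (U.1 : Mat n) := by
      rw [hmmul, hminv]
    have h3 : ((V⁻¹ * U).1 : Mat n)ᴴ * M * ((V⁻¹ * U).1 : Mat n)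
        = (U.1 : Mat n)ᴴ * ((V.1 : Mat n) * M * (V.1 : Mat n)ᴴ) * (U.1 : Mat n) := by
      rw [h1, Matrix.conjTranspose_mul, Matrix.conjTranspose_conjTranspose]
      noncomm_ring
    rw [h3]
  have hconjQ' : ∀ (U : G) (M : Mat n),
      Q ((U.1 : Mat n)ᴴ * M * (U.1 : Mat n)) = Q M := by
    intro U M
    have h := hconjQ U⁻¹ M
    rw [hminv, Matrix.conjTranspose_conjTranspose] at h
    exact h
  -- Q is the identity on the commutant
  have hQfixcomm : ∀ X ∈ commutant (A : Set (Mat n)), Q X = X := by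
    intro X hX
    ext i j
    show (∫ U, ((U.1 : Mat n)ᴴ * X * (U.1 : Mat n)) i j ∂μ) = X i j
    have h : (fun U : G => ((U.1 : Mat n)ᴴ * X * (U.1 : Mat n)) i j)
        = fun _ : G => X i j := by
      funext U
      have h2 : (U.1 : Mat n)ᴴ * X * (U.1 : Mat n) = X := by
        rw [Matrix.mul_assoc, ← hX (U.1 : Mat n) (hmA U), ← Matrix.mul_assoc, hmsu U, one_mul]
      rw [h2]
    rw [h, integral_const]
    simp
  -- the pairing property on the commutant
  have hpair : ∀ X ∈ commutant (A : Set (Mat n)), ∀ M : Mat n,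
      (Xᴴ * Q M).trace = (Xᴴ * M).trace := by
    intro X hX M
    have hXs : ∀ a ∈ A, a * Xᴴ = Xᴴ * a := by
      intro a ha
      have h := hX (star a) (star_mem ha)
      have h2 := congrArg Matrix.conjTranspose h
      rw [Matrix.star_eq_conjTranspose, Matrix.conjTranspose_mul, Matrix.conjTranspose_mul,
        Matrix.conjTranspose_conjTranspose] at h2
      exact h2.symm
    have h1 := keyEq (traceMulLM Xᴴ) M
    simp only [traceMulLM_apply] at h1
    rw [← h1]
    have h : (fun U : G => (Xᴴ * ((U.1 : Mat n)ᴴ * M * (U.1 : Mat n))).trace)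
        = fun _ : G => (Xᴴ * M).trace := by
      funext U
      have e1 : Xᴴ * ((U.1 : Mat n)ᴴ * M * (U.1 : Mat n))
          = (Xᴴ * (U.1 : Mat n)ᴴ * M) * (U.1 : Mat n) := by noncomm_ring
      rw [e1, Matrix.trace_mul_comm]
      have e2 : (U.1 : Mat n) * (Xᴴ * (U.1 : Mat n)ᴴ * M)
          = (((U.1 : Mat n) * Xᴴ) * (U.1 : Mat n)ᴴ) * M := by noncomm_ring
      rw [e2, hXs (U.1 : Mat n) (hmA U)]
      have e3 : ((Xᴴ * (U.1 : Mat n)) * (U.1 : Mat n)ᴴ) * M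
          = Xᴴ * ((U.1 : Mat n) * (U.1 : Mat n)ᴴ) * M := by noncomm_ring
      rw [e3, hmus U, mul_one]
    rw [h, integral_const]
    simp
  -- idempotency of Q
  have hQidem : ∀ M : Mat n, Q (Q M) = Q M := by
    intro M
    ext i j
    obtain ⟨φ, hφ⟩ := hQLM i j
    have h1 := keyEq φ M
    have h2 : (fun U : G => φ ((U.1 : Mat n)ᴴ * M * (U.1 : Mat n)))
        = fun _ : G => Q M i j := by
      funext U
      rw [hφ, hconjQ' U M]
    rw [h2, integral_const] at h1
    simp only [probReal_univ, one_smul] at h1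
    rw [hφ] at h1
    exact h1.symm
  -- conjugation preserves the HS norm
  have hnormAd : ∀ (U : G) (M : Mat n),
      ‖eE ((U.1 : Mat n)ᴴ * M * (U.1 : Mat n))‖ = ‖eE M‖ := by
    intro U M
    apply eE_norm_eq_of_trace_eq
    have e1 : ((U.1 : Mat n)ᴴ * M * (U.1 : Mat n))ᴴ * ((U.1 : Mat n)ᴴ * M * (U.1 : Mat n))
        = (U.1 : Mat n)ᴴ * (Mᴴ * M) * (U.1 : Mat n) := by
      rw [Matrix.conjTranspose_mul, Matrix.conjTranspose_mul,
        Matrix.conjTranspose_conjTranspose]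
      have e0 : (U.1 : Mat n)ᴴ * (Mᴴ * (U.1 : Mat n)) * ((U.1 : Mat n)ᴴ * M * (U.1 : Mat n))
          = (U.1 : Mat n)ᴴ * Mᴴ * ((U.1 : Mat n) * (U.1 : Mat n)ᴴ) * (M * (U.1 : Mat n)) := by
        noncomm_ring
      rw [e0, hmus U, mul_one]
      noncomm_ring
    rw [e1, Matrix.trace_mul_cycle, hmus U, one_mul]
  -- Q is an HS contraction
  have hQcontr : ∀ M : Mat n, ‖eE (Q M)‖ ≤ ‖eE M‖ := by
    intro M
    have h1 := keyEq (traceMulLM (Q M)ᴴ) M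
    simp only [traceMulLM_apply] at h1
    have hb : ∀ U : G, ‖((Q M)ᴴ * ((U.1 : Mat n)ᴴ * M * (U.1 : Mat n))).trace‖
        ≤ ‖eE (Q M)‖ * ‖eE M‖ := by
      intro U
      rw [← inner_eE]
      calc ‖(inner ℂ (eE (Q M)) (eE ((U.1 : Mat n)ᴴ * M * (U.1 : Mat n))) : ℂ)‖
          ≤ ‖eE (Q M)‖ * ‖eE ((U.1 : Mat n)ᴴ * M * (U.1 : Mat n))‖ := norm_inner_le_norm _ _
        _ = ‖eE (Q M)‖ * ‖eE M‖ := by rw [hnormAd U M]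
    have hnorm : ‖((Q M)ᴴ * Q M).trace‖ ≤ ‖eE (Q M)‖ * ‖eE M‖ := by
      rw [← h1]
      have h2 := norm_integral_le_of_norm_le_const (μ := μ)
        (C := ‖eE (Q M)‖ * ‖eE M‖) (Filter.Eventually.of_forall hb)
      simpa [measure_univ] using h2
    have hsq : ‖((Q M)ᴴ * Q M).trace‖ = ‖eE (Q M)‖ ^ 2 := by
      rw [← normsq_eE]
      rw [show (((‖eE (Q M)‖ : ℝ)) : ℂ) ^ 2 = ((‖eE (Q M)‖ ^ 2 : ℝ) : ℂ) from by push_cast; ring]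
      rw [Complex.norm_real]
      exact abs_of_nonneg (by positivity)
    rw [hsq] at hnorm
    nlinarith [norm_nonneg (eE (Q M)), norm_nonneg (eE M)]
  -- Q is self-adjoint
  have hF7 : ∀ Z W : Mat n, ((Q Z)ᴴ * W).trace = ((Q Z)ᴴ * Q W).trace := by
    intro Z W
    have horth : (inner ℂ (eE (Q Z)) (eE (W - Q W)) : ℂ) = 0 := by
      apply inner_tt_zero
      intro t
      have hfix : Q (Q Z + t • (W - Q W)) = Q Z := by
        rw [hQadd, hQsmul, hQidem, hQsub, hQidem, sub_self, smul_zero, add_zero]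
      calc ‖eE (Q Z)‖ = ‖eE (Q (Q Z + t • (W - Q W)))‖ := by rw [hfix]
        _ ≤ ‖eE (Q Z + t • (W - Q W))‖ := hQcontr _
        _ = ‖eE (Q Z) + t • eE (W - Q W)‖ := by rw [eE_add, eE_smul]
    rw [inner_eE, Matrix.mul_sub, Matrix.trace_sub] at horth
    exact sub_eq_zero.mp horth
  have hsa : ∀ Z W : Mat n, ((Q Z)ᴴ * W).trace = (Zᴴ * Q W).trace := by
    intro Z W
    have h1 : (Zᴴ * Q W).trace = starRingEnd ℂ (((Q W)ᴴ * Z).trace) := by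
      rw [conj_trace_form]
    rw [h1, hF7 W Z, conj_trace_form]
    exact hF7 Z W
  -- Q B commutes with every element of G
  have hQcommG : ∀ (V : G) (M : Mat n), (V.1 : Mat n) * Q M = Q M * (V.1 : Mat n) := by
    have hmid : ∀ (W : G) (M : Mat n),
        (W.1 : Mat n)ᴴ * Q M * (W.1 : Mat n) = Q M := by
      intro W M
      apply eq_of_trace_tests
      intro X
      have c1 : Xᴴ * ((W.1 : Mat n)ᴴ * Q M * (W.1 : Mat n))
          = (Xᴴ * (W.1 : Mat n)ᴴ * Q M) * (W.1 : Mat n) := by noncomm_ring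
      have c2 : (W.1 : Mat n) * (Xᴴ * (W.1 : Mat n)ᴴ * Q M)
          = ((W.1 : Mat n) * X * (W.1 : Mat n)ᴴ)ᴴ * Q M := by
        rw [Matrix.conjTranspose_mul, Matrix.conjTranspose_mul,
          Matrix.conjTranspose_conjTranspose]
        noncomm_ring
      calc (Xᴴ * ((W.1 : Mat n)ᴴ * Q M * (W.1 : Mat n))).trace
          = ((Xᴴ * (W.1 : Mat n)ᴴ * Q M) * (W.1 : Mat n)).trace := by rw [c1]
        _ = ((W.1 : Mat n) * (Xᴴ * (W.1 : Mat n)ᴴ * Q M)).trace := by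
            rw [Matrix.trace_mul_comm]
        _ = (((W.1 : Mat n) * X * (W.1 : Mat n)ᴴ)ᴴ * Q M).trace := by rw [c2]
        _ = ((Q ((W.1 : Mat n) * X * (W.1 : Mat n)ᴴ))ᴴ * M).trace := (hsa _ M).symm
        _ = ((Q X)ᴴ * M).trace := by rw [hconjQ W X]
        _ = (Xᴴ * Q M).trace := hsa X M
    intro V M
    have h2 := hmid V⁻¹ M
    rw [hminv, Matrix.conjTranspose_conjTranspose] at h2
    calc (V.1 : Mat n) * Q M
        = ((V.1 : Mat n) * Q M * (V.1 : Mat n)ᴴ) * (V.1 : Mat n) := by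
          rw [Matrix.mul_assoc ((V.1 : Mat n) * Q M), hmsu V, Matrix.mul_one]
      _ = Q M * (V.1 : Mat n) := by rw [h2]
  -- Q B lies in the commutant
  have hQBcomm : Q B ∈ commutant (A : Set (Mat n)) := by
    intro a ha
    have hs := mem_span_unitaries A ha
    refine Submodule.span_induction ?_ ?_ ?_ ?_ hs
    · intro w hw
      obtain ⟨hwA, hwU⟩ := hw
      have hwG : (⟨w, hwU⟩ : Matrix.unitaryGroup (Fin n) ℂ) ∈ G := (hG ⟨w, hwU⟩).mpr hwA
      exact hQcommG ⟨⟨w, hwU⟩, hwG⟩ B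
    · simp
    · intro y z _ _ hy hz
      rw [add_mul, mul_add, hy, hz]
    · intro c y _ hy
      rw [smul_mul_assoc, mul_smul_comm, hy]
  -- final assembly
  have hPB := hP.1 B
  set D : Mat n := Q B - P B with hDdef
  have hDcomm : D ∈ commutant (A : Set (Mat n)) := by
    intro a ha
    rw [hDdef, Matrix.mul_sub, Matrix.sub_mul, hQBcomm a ha, hPB a ha]
  have hDpair : (Dᴴ * D).trace = 0 := by
    have h1 : (Dᴴ * Q B).trace = (Dᴴ * B).trace := hpair D hDcomm B
    have h2 : (Dᴴ * P B).trace = (Dᴴ * B).trace := by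
      have h3 := hP.2.2 D B
      rw [hP.2.1 D hDcomm] at h3
      exact h3.symm
    nth_rewrite 2 [hDdef]
    rw [Matrix.mul_sub, Matrix.trace_sub, h1, h2, sub_self]
  have hD0 : D = 0 := by
    have h1 : (inner ℂ (eE D) (eE D) : ℂ) = 0 := by rw [inner_eE]; exact hDpair
    exact eE_inj D (inner_self_eq_zero.mp h1)
  have hfin : Q B = P B := by
    rw [hDdef] at hD0
    exact sub_eq_zero.mp hD0
  exact hfin.symm
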